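/- Let G be a CDS instance such that within every qualified component no unqualified path contains an internal qualified edge. Let Q_1, …, Q_M be the qualified components of G and let U_m be the number of unqualified components within Q_m. Let p be a prime with p > max(U_1, …, U_M, M−2), and let c_1, c_2, … be distinct nonzero elements of F_p. Let s, z_1, z_2 be i.i.d. uniform on F_p, and define z_3 = z_1 + z_2, z_4 = z_1 + 2·z_2, …, z_M = z_1 + (M−2)·z_2. Assign to every vertex in the i-th unqualified component of Q_m the signal s + c_i · z_m. Then this assignment is a valid CDS scheme with L = N = 1 and only L_Z = 2 noise symbols: for every qualified edge {v,u} the secret s is determined by the pair of signals (v,u), and for every unqualified edge {v,u} the pair of signals (v,u) is statistically independent of s. Hence rate 1/2 is achievable with randomness rate 1/2. -/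

import Mathlib

/-- Half-rate feasibility condition: within every qualified component, no unqualified
path contains an internal qualified edge. -/
def NoInternalQualifiedEdge {V : Type*} (Q U : SimpleGraph V) : Prop :=
  ∀ ⦃v u : V⦄ (w : U.Walk v u), w.IsTrail →
    (∀ x ∈ w.support, Q.connectedComponentMk x = Q.connectedComponentMk v) →
    ∀ x ∈ w.support, ∀ y ∈ w.support, ¬ Q.Adj x y

/-- `v` and `u` belong to the same unqualified component within a qualified component. -/
def SameUnqualComp {V : Type*} (Q U : SimpleGraph V) (v u : V) : Prop :=
  Q.Reachable v u ∧ ∃ w : U.Walk v u, ∀ x ∈ w.support, Q.Reachable x v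

/-- The noise symbol `z_k` derived from the two base noise symbols `w = (z_1, z_2)`:
`z_1` and `z_2` are the base symbols, and `z_k = z_1 + (k-2)·z_2` for `k ≥ 3`. -/
def derivedNoise (p : ℕ) (k : ℕ) (w : Fin 2 → ZMod p) : ZMod p :=
  if k = 1 then w 0 else if k = 2 then w 1 else w 0 + ((k - 2 : ℕ) : ZMod p) * w 1

/-- Randomness-cost reduction of the half-rate scheme.  Let `(Q, U)` satisfy
the half-rate feasibility condition, let `Q_1, …, Q_M` be its qualified components
(the map `m` sends each vertex to the index `1 ≤ m v ≤ M` of its qualified component),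
and let `γ v = c_i ≠ 0` be the distinct nonzero coefficients assigned to the unqualified
components within each qualified component.  Let `p` be a prime with `p > M - 2` (and
large enough that the distinct nonzero `c_i` exist, which is implicit in `γ`).  With
`s, z_1, z_2` i.i.d. uniform on `F_p` and the derived noises
`z_3 = z_1 + z_2, …, z_M = z_1 + (M-2)·z_2`, assigning to each vertex `v` the signal
`s + c_i · z_{m v}` gives a valid CDS scheme with `L = N = 1` and only `L_Z = 2` noise
symbols: every qualified edge can decode the secret and for every unqualified edge the
pair of signals is independent of the secret.  Hence rate `1/2` is achievable with
randomness rate `1/2`. -/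


lemma dn_castinj {p a b : ℕ} (ha : a < p) (hb : b < p) (h : (a : ZMod p) = b) : a = b := by
  haveI : NeZero p := ⟨by omega⟩
  rw [← ZMod.val_cast_of_lt ha, ← ZMod.val_cast_of_lt hb, h]

lemma dn_cast_ne {p a : ℕ} (h0 : 0 < a) (ha : a < p) : (a : ZMod p) ≠ 0 := by
  intro h
  have := dn_castinj ha (by omega : 0 < p) (by simpa using h)
  omega

lemma derivedNoise_add (p k : ℕ) (w δ : Fin 2 → ZMod p) :
    derivedNoise p k (w + δ) = derivedNoise p k w + derivedNoise p k δ := by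
  unfold derivedNoise
  split_ifs <;> simp [Pi.add_apply] <;> ring

lemma derivedNoise_sub (p k : ℕ) (w δ : Fin 2 → ZMod p) :
    derivedNoise p k (w - δ) = derivedNoise p k w - derivedNoise p k δ := by
  unfold derivedNoise
  split_ifs <;> simp [Pi.sub_apply] <;> ring

lemma dn_surj1 (p k : ℕ) (t : ZMod p) : ∃ δ : Fin 2 → ZMod p, derivedNoise p k δ = t := by
  by_cases h2 : k = 2
  · exact ⟨![0, t], by simp [derivedNoise, h2]⟩
  · exact ⟨![t, 0], by unfold derivedNoise; split_ifs <;> simp⟩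

lemma dn_surj2_lt (p : ℕ) [Fact p.Prime] (M k l : ℕ) (hMp : M - 2 < p)
    (hk1 : 1 ≤ k) (hlM : l ≤ M) (hkl : k < l) (t₁ t₂ : ZMod p) :
    ∃ δ : Fin 2 → ZMod p, derivedNoise p k δ = t₁ ∧ derivedNoise p l δ = t₂ := by
  rcases eq_or_lt_of_le hk1 with h1 | hk2
  · -- k = 1
    rcases eq_or_lt_of_le (by omega : 2 ≤ l) with h2 | hl3
    · exact ⟨![t₁, t₂], by simp [derivedNoise, ← h1, ← h2]⟩
    · have hc : ((l - 2 : ℕ) : ZMod p) ≠ 0 := dn_cast_ne (by omega) (by omega)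
      refine ⟨![t₁, (t₂ - t₁) * ((l - 2 : ℕ) : ZMod p)⁻¹], ?_, ?_⟩
      · simp [derivedNoise, ← h1]
      · have hl1 : l ≠ 1 := by omega
        have hl2 : l ≠ 2 := by omega
        simp only [derivedNoise, if_neg hl1, if_neg hl2, Matrix.cons_val_zero,
          Matrix.cons_val_one, Matrix.head_cons]
        field_simp
        ring
  · rcases eq_or_lt_of_le (by omega : 2 ≤ k) with h2 | hk3
    · -- k = 2, l ≥ 3
      have hl1 : l ≠ 1 := by omega
      have hl2 : l ≠ 2 := by omega
      refine ⟨![t₂ - ((l - 2 : ℕ) : ZMod p) * t₁, t₁], ?_, ?_⟩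
      · simp [derivedNoise, ← h2]
      · simp only [derivedNoise, if_neg hl1, if_neg hl2, Matrix.cons_val_zero,
          Matrix.cons_val_one, Matrix.head_cons]
        ring
    · -- 3 ≤ k < l
      set c : ZMod p := ((k - 2 : ℕ) : ZMod p) with hc
      set d : ZMod p := ((l - 2 : ℕ) : ZMod p) with hd
      have hne : d - c ≠ 0 := by
        intro h
        have : d = c := by linear_combination h
        have := dn_castinj (by omega : l - 2 < p) (by omega : k - 2 < p) this
        omega
      set y : ZMod p := (t₂ - t₁) * (d - c)⁻¹ with hy
      refine ⟨![t₁ - c * y, y], ?_, ?_⟩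
      · have hk1' : k ≠ 1 := by omega
        have hk2' : k ≠ 2 := by omega
        simp only [derivedNoise, if_neg hk1', if_neg hk2', Matrix.cons_val_zero,
          Matrix.cons_val_one, Matrix.head_cons, ← hc]
        ring
      · have hl1 : l ≠ 1 := by omega
        have hl2 : l ≠ 2 := by omega
        simp only [derivedNoise, if_neg hl1, if_neg hl2, Matrix.cons_val_zero,
          Matrix.cons_val_one, Matrix.head_cons, ← hd]
        have h1 : (d - c)⁻¹ * (d - c) = 1 := inv_mul_cancel₀ hne
        rw [hy]
        linear_combination (t₂ - t₁) * h1

lemma dn_surj2 (p : ℕ) [Fact p.Prime] (M k l : ℕ) (hMp : M - 2 < p)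
    (hk1 : 1 ≤ k) (hkM : k ≤ M) (hl1 : 1 ≤ l) (hlM : l ≤ M) (hkl : k ≠ l) (t₁ t₂ : ZMod p) :
    ∃ δ : Fin 2 → ZMod p, derivedNoise p k δ = t₁ ∧ derivedNoise p l δ = t₂ := by
  rcases lt_or_gt_of_ne hkl with h | h
  · exact dn_surj2_lt p M k l hMp hk1 hlM h t₁ t₂
  · obtain ⟨δ, h1, h2⟩ := dn_surj2_lt p M l k hMp hl1 hkM h t₂ t₁
    exact ⟨δ, h2, h1⟩

theorem cds_half_rate_scheme_two_noise {V : Type*} (Q U : SimpleGraph V)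
    (hdisj : ∀ v u : V, ¬ (Q.Adj v u ∧ U.Adj v u))
    (hcond : NoInternalQualifiedEdge Q U)
    (p : ℕ) (hp : p.Prime) (M : ℕ) (hMp : M - 2 < p)
    (m : V → ℕ)
    (hm1 : ∀ v : V, 1 ≤ m v ∧ m v ≤ M)
    (hm : ∀ v u : V, m v = m u ↔ Q.Reachable v u)
    (hmsurj : ∀ k : ℕ, 1 ≤ k → k ≤ M → ∃ v : V, m v = k)
    (γ : V → ZMod p)
    (hγ0 : ∀ v : V, γ v ≠ 0)
    (hγ : ∀ v u : V, Q.Reachable v u → (γ v = γ u ↔ SameUnqualComp Q U v u)) :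
    (∀ v u : V, Q.Adj v u →
      ∃ g : ZMod p → ZMod p → ZMod p,
        ∀ (s : ZMod p) (w : Fin 2 → ZMod p),
          g (s + γ v * derivedNoise p (m v) w) (s + γ u * derivedNoise p (m u) w) = s) ∧
    (∀ v u : V, U.Adj v u → ∀ s₁ s₂ a b : ZMod p,
      Nat.card {w : Fin 2 → ZMod p //
          s₁ + γ v * derivedNoise p (m v) w = a ∧ s₁ + γ u * derivedNoise p (m u) w = b} =
      Nat.card {w : Fin 2 → ZMod p //
          s₂ + γ v * derivedNoise p (m v) w = a ∧ s₂ + γ u * derivedNoise p (m u) w = b}) := by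
  haveI : Fact p.Prime := ⟨hp⟩
  classical
  constructor
  · -- qualified edges: decoding
    intro v u hAdj
    have hmvu : m v = m u := (hm v u).mpr hAdj.reachable
    have hne : γ u - γ v ≠ 0 := by
      intro h
      have hγeq : γ v = γ u := by linear_combination -h
      have hsame : SameUnqualComp Q U v u := (hγ v u hAdj.reachable).mp hγeq
      obtain ⟨hreach, wlk, hwlk⟩ := hsame
      have hP := wlk.bypass_isPath
      exact hcond wlk.bypass hP.isTrail
        (fun x hx => SimpleGraph.ConnectedComponent.sound
          (hwlk x (wlk.support_bypass_subset hx)))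
        v wlk.bypass.start_mem_support u wlk.bypass.end_mem_support hAdj
    refine ⟨fun a b => (γ u - γ v)⁻¹ * (γ u * a - γ v * b), fun s w => ?_⟩
    rw [hmvu]
    field_simp
    ring
  · -- unqualified edges: privacy
    intro v u hAdj s₁ s₂ a b
    have key : ∃ δ : Fin 2 → ZMod p,
        γ v * derivedNoise p (m v) δ = s₁ - s₂ ∧ γ u * derivedNoise p (m u) δ = s₁ - s₂ := by
      by_cases hmeq : m v = m u
      · have hreach : Q.Reachable v u := (hm v u).mp hmeq
        have hγeq : γ v = γ u := by
          refine (hγ v u hreach).mpr ⟨hreach, hAdj.toWalk, ?_⟩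
          intro x hx
          simp only [SimpleGraph.Walk.support_cons, SimpleGraph.Walk.support_nil,
            List.mem_cons, List.mem_singleton] at hx
          rcases hx with rfl | hx
          · exact SimpleGraph.Reachable.refl x
          · simp at hx
            subst hx
            exact hreach.symm
        obtain ⟨δ, hδ⟩ := dn_surj1 p (m v) ((s₁ - s₂) * (γ v)⁻¹)
        refine ⟨δ, ?_, ?_⟩
        · rw [hδ, mul_comm (s₁ - s₂), ← mul_assoc, mul_inv_cancel₀ (hγ0 v), one_mul]
        · rw [← hmeq, ← hγeq, hδ, mul_comm (s₁ - s₂), ← mul_assoc,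
            mul_inv_cancel₀ (hγ0 v), one_mul]
      · obtain ⟨δ, hδ1, hδ2⟩ := dn_surj2 p M (m v) (m u) hMp (hm1 v).1 (hm1 v).2
          (hm1 u).1 (hm1 u).2 hmeq ((s₁ - s₂) * (γ v)⁻¹) ((s₁ - s₂) * (γ u)⁻¹)
        refine ⟨δ, ?_, ?_⟩
        · rw [hδ1, mul_comm (s₁ - s₂), ← mul_assoc, mul_inv_cancel₀ (hγ0 v), one_mul]
        · rw [hδ2, mul_comm (s₁ - s₂), ← mul_assoc, mul_inv_cancel₀ (hγ0 u), one_mul]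
    obtain ⟨δ, hδv, hδu⟩ := key
    refine Nat.card_congr ⟨fun x => ⟨x.1 + δ, ?_, ?_⟩, fun x => ⟨x.1 - δ, ?_, ?_⟩,
      fun x => ?_, fun x => ?_⟩
    · rw [derivedNoise_add, mul_add]
      linear_combination x.2.1 + hδv
    · rw [derivedNoise_add, mul_add]
      linear_combination x.2.2 + hδu
    · rw [derivedNoise_sub, mul_sub]
      linear_combination x.2.1 - hδv
    · rw [derivedNoise_sub, mul_sub]
      linear_combination x.2.2 - hδu
    · ext i; simp
    · ext i; simp
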